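/- Let T ≥ 1 be a natural number, let γ, μ > 0 with γμ < 1, let C ≥ 0, and let a, e : ℕ → ℝ be sequences with a(t) ≥ 0 and e(t) ≥ 0 for all t, such that (γ/6)·e(t) ≤ (1 − γμ)·a(t) − a(t+1) + γC for all 0 ≤ t < T. Define weights w(t) = (1 − γμ)^{−(t+1)} and W = Σ_{t=0}^{T−1} w(t). Then (1/W)·Σ_{t=0}^{T−1} w(t)·e(t) ≤ (6/γ)·exp(−γμT)·a(0) + 6C. -/

import Mathlib

/-- Deterministic core of Theorem 1, case `T ≤ 2κ`: weighted telescoping of the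
one-step inequality with weights `w(t) = (1 − γμ)^{−(t+1)}` yields
`(1/W) Σ w(t) e(t) ≤ (6/γ) exp(−γμT) a(0) + 6C`. -/
theorem stmt_15 (T : ℕ) (hT : 1 ≤ T) (γ μ C : ℝ)
    (hγ : 0 < γ) (hμ : 0 < μ) (hγμ : γ * μ < 1) (hC : 0 ≤ C)
    (a e : ℕ → ℝ) (ha : ∀ t, 0 ≤ a t) (he : ∀ t, 0 ≤ e t)
    (hrec : ∀ t < T, γ / 6 * e t ≤ (1 - γ * μ) * a t - a (t + 1) + γ * C)
    (w : ℕ → ℝ) (hw : ∀ t, w t = (1 - γ * μ) ^ (-(t + 1 : ℤ)))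
    (W : ℝ) (hW : W = ∑ t ∈ Finset.range T, w t) :
    1 / W * ∑ t ∈ Finset.range T, w t * e t
      ≤ 6 / γ * Real.exp (-(γ * μ * T)) * a 0 + 6 * C := by
  set q : ℝ := 1 - γ * μ with hqdef
  have hγμ0 : 0 < γ * μ := mul_pos hγ hμ
  have hq0 : 0 < q := by simp only [hqdef]; linarith
  have hqne : q ≠ 0 := ne_of_gt hq0
  have hwpos : ∀ t, 0 < w t := fun t => by rw [hw]; exact zpow_pos hq0 _
  set f : ℕ → ℝ := fun t => q ^ (-(t : ℤ)) * a t with hf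
  have hstep : ∀ t ∈ Finset.range T,
      γ / 6 * (w t * e t) ≤ (f t - f (t + 1)) + γ * C * w t := by
    intro t ht
    have h := hrec t (Finset.mem_range.mp ht)
    have h2 := mul_le_mul_of_nonneg_left h (hwpos t).le
    have hqq : w t * q = q ^ (-(t : ℤ)) := by
      rw [hw]
      calc q ^ (-(t + 1 : ℤ)) * q = q ^ (-(t + 1 : ℤ)) * q ^ (1 : ℤ) := by
            rw [zpow_one]
        _ = q ^ (-(t + 1 : ℤ) + 1) := (zpow_add₀ hqne _ _).symm
        _ = q ^ (-(t : ℤ)) := by norm_num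
    have hft1 : f (t + 1) = w t * a (t + 1) := by
      simp only [hf, hw]
      push_cast
      ring_nf
    have hft : f t = (w t * q) * a t := by rw [hqq]
    have hexp : w t * ((1 - γ * μ) * a t - a (t + 1) + γ * C)
        = (f t - f (t + 1)) + γ * C * w t := by
      rw [hft, hft1, ← hqdef]; ring
    calc γ / 6 * (w t * e t) = w t * (γ / 6 * e t) := by ring
      _ ≤ w t * ((1 - γ * μ) * a t - a (t + 1) + γ * C) := h2
      _ = (f t - f (t + 1)) + γ * C * w t := hexp
  have hsum := Finset.sum_le_sum hstep
  rw [Finset.sum_add_distrib, Finset.sum_range_sub' f] at hsum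
  have hsum2 : γ / 6 * ∑ t ∈ Finset.range T, w t * e t ≤ a 0 + γ * C * W := by
    have hL : ∑ t ∈ Finset.range T, γ / 6 * (w t * e t)
        = γ / 6 * ∑ t ∈ Finset.range T, w t * e t := by
      rw [Finset.mul_sum]
    have hR : ∑ t ∈ Finset.range T, γ * C * w t = γ * C * W := by
      rw [hW, Finset.mul_sum]
    have hf0 : f 0 = a 0 := by simp [hf]
    have hfT : 0 ≤ f T := mul_nonneg (zpow_pos hq0 _).le (ha T)
    rw [hL, hR] at hsum
    linarith
  have hWpos : 0 < W := by
    rw [hW]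
    exact Finset.sum_pos (fun t _ => hwpos t)
      (Finset.nonempty_range_iff.mpr (by omega))
  -- 1/W ≤ exp(-(γμT))
  have hWge : q ^ (-(T : ℤ)) ≤ W := by
    have hmem : T - 1 ∈ Finset.range T := Finset.mem_range.mpr (by omega)
    have h1 := Finset.single_le_sum (f := w) (fun t _ => (hwpos t).le) hmem
    have h2 : w (T - 1) = q ^ (-(T : ℤ)) := by
      rw [hw]; congr 1; omega
    rw [← hW, h2] at h1
    exact h1
  have h1W : 1 / W ≤ Real.exp (-(γ * μ * T)) := by
    have hqe : q ≤ Real.exp (-(γ * μ)) := by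
      have := Real.add_one_le_exp (-(γ * μ)); simp only [hqdef]; linarith
    have hqT : q ^ T ≤ Real.exp (-(γ * μ * T)) := by
      calc q ^ T ≤ (Real.exp (-(γ * μ))) ^ T := pow_le_pow_left₀ hq0.le hqe T
        _ = Real.exp (-(γ * μ * T)) := by
            rw [← Real.exp_nat_mul]; congr 1; push_cast; ring
    have hinv : 1 / W ≤ 1 / q ^ (-(T : ℤ)) :=
      one_div_le_one_div_of_le (zpow_pos hq0 _) hWge
    have heq : (1 : ℝ) / q ^ (-(T : ℤ)) = q ^ T := by
      rw [zpow_neg, one_div, inv_inv, zpow_natCast]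
    rw [heq] at hinv
    linarith
  have hSnn : 0 ≤ ∑ t ∈ Finset.range T, w t * e t :=
    Finset.sum_nonneg (fun t _ => mul_nonneg (hwpos t).le (he t))
  have hS : ∑ t ∈ Finset.range T, w t * e t ≤ 6 / γ * a 0 + 6 * C * W := by
    have h6 : (0 : ℝ) ≤ 6 / γ := by positivity
    have h := mul_le_mul_of_nonneg_left hsum2 h6
    have hl : 6 / γ * (γ / 6 * ∑ t ∈ Finset.range T, w t * e t)
        = ∑ t ∈ Finset.range T, w t * e t := by
      field_simp
    have hr : 6 / γ * (a 0 + γ * C * W) = 6 / γ * a 0 + 6 * C * W := by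
      field_simp
    rw [hl, hr] at h
    exact h
  have hkey : 6 / γ * a 0 * (1 / W) ≤ 6 / γ * Real.exp (-(γ * μ * T)) * a 0 := by
    have := mul_le_mul_of_nonneg_left h1W
      (mul_nonneg (by positivity : (0:ℝ) ≤ 6 / γ) (ha 0))
    linarith
  calc 1 / W * ∑ t ∈ Finset.range T, w t * e t
      ≤ 1 / W * (6 / γ * a 0 + 6 * C * W) :=
        mul_le_mul_of_nonneg_left hS (one_div_pos.mpr hWpos).le
    _ = 6 / γ * a 0 * (1 / W) + 6 * C := by
        field_simp
    _ ≤ 6 / γ * Real.exp (-(γ * μ * T)) * a 0 + 6 * C := by linarith
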